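/- Fix n ≥ 1 and consider in ℝ² the annuli A₁ = A((0,2^{−n}), 2^{−n}, 30) and A₂ = A((0, 2^{−n} − 2^{−5n}), 2^{−n} − 2^{−5n}, 30). Then the diameter of A₁ ∩ A₂ is at least C·2^{−13.5n} for some absolute constant C > 0 independent of n; consequently the exponent 13.5 in the upper bound 24·2^{−13.5n} for diameters of intersections of such thin annuli is optimal. -/
import Mathlib

open MeasureTheory Metric Set Filter

noncomputable def pt (a b : ℝ) : EuclideanSpace ℝ (Fin 2) :=
  (WithLp.equiv 2 (Fin 2 → ℝ)).symm ![a, b]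

noncomputable def ann30 (z : EuclideanSpace ℝ (Fin 2)) (r : ℝ) :
    Set (EuclideanSpace ℝ (Fin 2)) :=
  closedBall z r \ closedBall z (r - r ^ (30 : ℕ))

lemma dist_pt (a b c d : ℝ) :
    dist (pt a b) (pt c d) = Real.sqrt ((a - c) ^ 2 + (b - d) ^ 2) := by
  rw [EuclideanSpace.dist_eq]
  simp [pt, Fin.sum_univ_two, Real.dist_eq, sq_abs]

set_option maxHeartbeats 1000000 in
/-- Optimality of the exponent `13.5`: the intersection of the two annuli
`A((0,2^{-n}),2^{-n},30)` and `A((0,2^{-n}-2^{-5n}),2^{-n}-2^{-5n},30)` has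
diameter at least `C · 2^{-13.5 n}` for an absolute constant `C > 0`. -/
theorem stmt8 :
    ∃ C > (0 : ℝ), ∀ n : ℕ, 1 ≤ n →
      C * (2 : ℝ) ^ (-(13.5 : ℝ) * (n : ℝ)) ≤
        Metric.diam
          (ann30 (pt 0 ((2 : ℝ) ^ (-(n : ℝ)))) ((2 : ℝ) ^ (-(n : ℝ))) ∩
           ann30 (pt 0 ((2 : ℝ) ^ (-(n : ℝ)) - (2 : ℝ) ^ (-5 * (n : ℝ))))
             ((2 : ℝ) ^ (-(n : ℝ)) - (2 : ℝ) ^ (-5 * (n : ℝ)))) := by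
  refine ⟨1/2, by norm_num, ?_⟩
  intro n hn
  set u : ℝ := (2 : ℝ) ^ (-(n : ℝ) / 2) with hu
  have hu0 : 0 < u := Real.rpow_pos_of_pos (by norm_num) _
  have huk : ∀ k : ℕ, u ^ k = (2 : ℝ) ^ ((-(n : ℝ) / 2) * k) := fun k => by
    rw [hu, ← Real.rpow_natCast ((2:ℝ) ^ (-(n : ℝ) / 2)) k,
      ← Real.rpow_mul (by norm_num)]
  have h2 : (2 : ℝ) ^ (-(n : ℝ)) = u ^ 2 := by
    rw [huk 2]; norm_num
  have h10 : (2 : ℝ) ^ (-5 * (n : ℝ)) = u ^ 10 := by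
    rw [huk 10]; ring_nf
  have h27 : (2 : ℝ) ^ (-(13.5 : ℝ) * (n : ℝ)) = u ^ 27 := by
    rw [huk 27]; norm_num; ring_nf
  -- basic bounds on u
  have hu2 : u ^ 2 ≤ 1 / 2 := by
    rw [huk 2]
    have h1n : (1 : ℝ) ≤ (n : ℝ) := by exact_mod_cast hn
    calc (2:ℝ) ^ ((-(n : ℝ) / 2) * 2) ≤ (2:ℝ) ^ (-1 : ℝ) :=
          Real.rpow_le_rpow_of_exponent_le (by norm_num) (by linarith)
      _ = 1 / 2 := by
          rw [show (-1 : ℝ) = ((-1 : ℤ) : ℝ) by norm_num, Real.rpow_intCast]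
          norm_num
  have hu1 : u < 1 := by nlinarith
  have hule : u ≤ 1 := hu1.le
  -- names
  set r₂ : ℝ := u ^ 2 - u ^ 10 with hr₂
  have h8 : u ^ 8 ≤ 1 / 2 := by
    have := pow_le_pow_of_le_one hu0.le hule (show 2 ≤ 8 by norm_num)
    linarith
  have hr2half : u ^ 2 / 2 ≤ r₂ := by
    have h82 : u ^ 8 * u ^ 2 ≤ (1/2) * u ^ 2 :=
      mul_le_mul_of_nonneg_right h8 (by positivity)
    rw [hr₂]; nlinarith [h82]
  have hr2pos : 0 < r₂ := lt_of_lt_of_le (by positivity) hr2half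
  set x : ℝ := u ^ 27 / 2 with hx
  have hxpos : 0 < x := by positivity
  have hx2 : x ^ 2 = u ^ 54 / 4 := by rw [hx]; ring
  have hxr : x ≤ r₂ := by
    have h27le : u ^ 27 ≤ u ^ 2 := pow_le_pow_of_le_one hu0.le hule (by norm_num)
    calc x = u ^ 27 / 2 := rfl
      _ ≤ u ^ 2 / 2 := by linarith
      _ ≤ r₂ := hr2half
  set s : ℝ := Real.sqrt (r₂ ^ 2 - x ^ 2) with hs
  have hs0 : 0 ≤ s := Real.sqrt_nonneg _
  have hs2 : s ^ 2 = r₂ ^ 2 - x ^ 2 := Real.sq_sqrt (by nlinarith)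
  have hsr : s ≤ r₂ := by
    rw [hs]
    calc Real.sqrt (r₂ ^ 2 - x ^ 2) ≤ Real.sqrt (r₂ ^ 2) :=
          Real.sqrt_le_sqrt (by nlinarith)
      _ = r₂ := Real.sqrt_sq hr2pos.le
  -- key estimate: r₂ - s ≤ u^52/2
  have hrs : r₂ - s ≤ u ^ 52 / 2 := by
    have hmul : (r₂ - s) * (r₂ + s) = x ^ 2 := by linear_combination -hs2
    have h1 : (r₂ - s) * (u ^ 2 / 2) ≤ u ^ 54 / 4 := by
      nlinarith [hmul, hr2half, hs0, hsr, hx2]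
    have hpos : (0:ℝ) < u ^ 2 / 2 := by positivity
    have h2' : r₂ - s ≤ (u ^ 54 / 4) / (u ^ 2 / 2) := (le_div_iff₀ hpos).mpr h1
    calc r₂ - s ≤ (u ^ 54 / 4) / (u ^ 2 / 2) := h2'
      _ = u ^ 52 / 2 := by field_simp; ring
  -- strict key inequality
  have hA : 2 * u ^ 10 * (r₂ - s) < 2 * u ^ 62 - u ^ 120 := by
    have h1 : 2 * u ^ 10 * (r₂ - s) ≤ 2 * u ^ 10 * (u ^ 52 / 2) :=
      mul_le_mul_of_nonneg_left hrs (by positivity)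
    have h1' : 2 * u ^ 10 * (u ^ 52 / 2) = u ^ 62 := by ring
    have h2' : u ^ 120 < u ^ 62 := by
      calc u ^ 120 = u ^ 62 * u ^ 58 := by ring
        _ < u ^ 62 * 1 := by
            apply mul_lt_mul_of_pos_left _ (by positivity)
            calc u ^ 58 ≤ u ^ 1 := pow_le_pow_of_le_one hu0.le hule (by norm_num)
              _ = u := pow_one u
              _ < 1 := hu1
        _ = u ^ 62 := mul_one _
    have h1'' : 2 * u ^ 10 * (r₂ - s) ≤ u ^ 62 := h1.trans_eq h1'
    linarith
  -- rewrite goal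
  rw [h2, h10, h27]
  set z₁ := pt 0 (u ^ 2) with hz₁
  set z₂ := pt 0 (u ^ 2 - u ^ 10) with hz₂
  set O := pt 0 0 with hO
  set P := pt x (r₂ - s) with hP
  -- distances
  have hOz1 : dist O z₁ = u ^ 2 := by
    rw [hO, hz₁, dist_pt, show (0 - (0:ℝ)) ^ 2 + (0 - u ^ 2) ^ 2 = (u ^ 2) ^ 2 by ring]
    exact Real.sqrt_sq (by positivity)
  have hOz2 : dist O z₂ = r₂ := by
    rw [hO, hz₂, dist_pt,
      show (0 - (0:ℝ)) ^ 2 + (0 - (u ^ 2 - u ^ 10)) ^ 2 = r₂ ^ 2 by rw [hr₂]; ring]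
    exact Real.sqrt_sq hr2pos.le
  have hPz2 : dist P z₂ = r₂ := by
    rw [hP, hz₂, dist_pt,
      show (x - 0) ^ 2 + (r₂ - s - (u ^ 2 - u ^ 10)) ^ 2 = x ^ 2 + s ^ 2 by rw [hr₂]; ring,
      show x ^ 2 + s ^ 2 = r₂ ^ 2 by rw [hs2]; ring]
    exact Real.sqrt_sq hr2pos.le
  have hPz1sq : dist P z₁ ^ 2 = u ^ 4 - 2 * u ^ 10 * (r₂ - s) := by
    rw [hP, hz₁, dist_pt, Real.sq_sqrt (by positivity)]
    have hs2' : s ^ 2 = (u ^ 2 - u ^ 10) ^ 2 - x ^ 2 := by rw [hs2, hr₂]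
    rw [hr₂]
    linear_combination hs2'
  have hPz1le : dist P z₁ ≤ u ^ 2 := by
    have hsq : dist P z₁ ^ 2 ≤ (u ^ 2) ^ 2 := by
      rw [hPz1sq]
      nlinarith [mul_nonneg (by positivity : (0:ℝ) ≤ 2 * u ^ 10) (by linarith : (0:ℝ) ≤ r₂ - s)]
    nlinarith [hsq, dist_nonneg (x := P) (y := z₁), pow_pos hu0 2]
  have hPz1gt : u ^ 2 - (u ^ 2) ^ (30:ℕ) < dist P z₁ := by
    have h60 : (u ^ 2) ^ (30:ℕ) = u ^ 60 := by ring
    rw [h60]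
    have hlb : (u ^ 2 - u ^ 60) ^ 2 < dist P z₁ ^ 2 := by
      rw [hPz1sq]; nlinarith [hA]
    have hnn : 0 ≤ u ^ 2 - u ^ 60 := by
      have := pow_le_pow_of_le_one hu0.le hule (show 2 ≤ 60 by norm_num)
      linarith
    nlinarith [dist_nonneg (x := P) (y := z₁), hlb, hnn]
  -- memberships
  have hOmem : O ∈ ann30 z₁ (u ^ 2) ∩ ann30 z₂ (u ^ 2 - u ^ 10) := by
    constructor
    · refine ⟨mem_closedBall.mpr hOz1.le, fun h => ?_⟩
      rw [mem_closedBall, hOz1] at h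
      have : (0:ℝ) < (u ^ 2) ^ (30:ℕ) := by positivity
      linarith
    · refine ⟨mem_closedBall.mpr (by rw [hOz2]), fun h => ?_⟩
      rw [mem_closedBall, hOz2, ← hr₂] at h
      have : (0:ℝ) < r₂ ^ (30:ℕ) := by positivity
      linarith
  have hPmem : P ∈ ann30 z₁ (u ^ 2) ∩ ann30 z₂ (u ^ 2 - u ^ 10) := by
    constructor
    · refine ⟨mem_closedBall.mpr hPz1le, fun h => ?_⟩
      rw [mem_closedBall] at h
      linarith [hPz1gt]
    · refine ⟨mem_closedBall.mpr (by rw [hPz2, hr₂]), fun h => ?_⟩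
      rw [mem_closedBall, hPz2, ← hr₂] at h
      have : (0:ℝ) < r₂ ^ (30:ℕ) := by positivity
      linarith
  -- boundedness
  have hbdd : Bornology.IsBounded
      (ann30 z₁ (u ^ 2) ∩ ann30 z₂ (u ^ 2 - u ^ 10)) :=
    (isBounded_closedBall (x := z₁) (r := u ^ 2)).subset (fun y hy => hy.1.1)
  -- conclude
  have hdOP : (1:ℝ)/2 * u ^ 27 ≤ dist O P := by
    rw [hO, hP, dist_pt]
    have heq : (1:ℝ)/2 * u ^ 27 = Real.sqrt (x ^ 2) := by
      rw [Real.sqrt_sq hxpos.le, hx]; ring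
    rw [heq]
    apply Real.sqrt_le_sqrt
    nlinarith [sq_nonneg (0 - (r₂ - s))]
  calc (1:ℝ)/2 * u ^ 27 ≤ dist O P := hdOP
    _ ≤ Metric.diam (ann30 z₁ (u ^ 2) ∩ ann30 z₂ (u ^ 2 - u ^ 10)) :=
        dist_le_diam_of_mem hbdd hOmem hPmem
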